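/- For every finite set F of positive integers and every choice of natural numbers (q_s)_{s∈F} with 1 ≤ q_s ≤ s for each s ∈ F, the sum Σ_{s∈F} q_s·(-1)^s/((s+1)!) lies strictly between e^{−1} − 1 and e^{−1} (with the empty sum equal to 0). -/

import Mathlib

open Finset

private noncomputable def Sn (n : ℕ) : ℝ := ∑ i ∈ range n, (-1) ^ i * ((Nat.factorial i : ℝ))⁻¹

private lemma Sn_tendsto :
    Filter.Tendsto Sn Filter.atTop (nhds (Real.exp (-1))) := by
  have h := NormedSpace.exp_series_hasSum_exp' (𝕂 := ℝ) (-1 : ℝ)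
  rw [← Real.exp_eq_exp_ℝ] at h
  have h2 := h.tendsto_sum_nat
  convert h2 using 2 with n
  unfold Sn
  refine Finset.sum_congr rfl fun i _ => ?_
  simp [mul_comm]

private lemma Sn_succ (n : ℕ) : Sn (n + 1) = Sn n + (-1) ^ n * ((Nat.factorial n : ℝ))⁻¹ :=
  Finset.sum_range_succ _ n

private lemma fact_antitone : Antitone (fun n : ℕ => ((Nat.factorial n : ℝ))⁻¹) := by
  intro a b hab
  have h := Nat.factorial_le hab
  have h0 : (0:ℝ) < Nat.factorial a := by positivity
  exact inv_anti₀ h0 (by exact_mod_cast h)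

private lemma Sn_even_le (k : ℕ) : Sn (2 * k) ≤ Real.exp (-1) :=
  Antitone.alternating_series_le_tendsto Sn_tendsto fact_antitone k

private lemma Sn_le_odd (k : ℕ) : Real.exp (-1) ≤ Sn (2 * k + 1) :=
  Antitone.tendsto_le_alternating_series Sn_tendsto fact_antitone k

private lemma inv_fact_strict (n : ℕ) (hn : 0 < n) :
    ((Nat.factorial (n+1) : ℝ))⁻¹ < ((Nat.factorial n : ℝ))⁻¹ := by
  have h : Nat.factorial n < Nat.factorial (n+1) := (Nat.factorial_lt hn).mpr (Nat.lt_succ_self n)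
  have h0 : (0:ℝ) < Nat.factorial n := by positivity
  exact inv_strictAnti₀ h0 (by exact_mod_cast h)

/-- For every finite set `F` of positive integers and coefficients `q_s` with `1 ≤ q_s ≤ s`,
the sum `Σ_{s∈F} q_s·(-1)^s/((s+1)!)` lies strictly between `e⁻¹ − 1` and `e⁻¹`. -/
theorem negative_part_bounds (F : Finset ℕ) (hFpos : ∀ s ∈ F, 0 < s)
    (q : ℕ → ℕ) (hq : ∀ s ∈ F, 1 ≤ q s ∧ q s ≤ s) :
    Real.exp (-1) - 1 < ∑ s ∈ F, (q s : ℝ) * (-1) ^ s / (Nat.factorial (s + 1)) ∧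
    ∑ s ∈ F, (q s : ℝ) * (-1) ^ s / (Nat.factorial (s + 1)) < Real.exp (-1) := by
  obtain ⟨N, hN1, hN⟩ : ∃ N : ℕ, 1 ≤ N ∧ ∀ s ∈ F, s < 2 * N := by
    rcases F.exists_le with ⟨M, hM⟩
    exact ⟨M + 1, by omega, fun s hs => by have := hM s hs; omega⟩
  set g : ℕ → ℝ := fun s => if Even s then ((Nat.factorial s : ℝ))⁻¹ - ((Nat.factorial (s+1) : ℝ))⁻¹ else 0 with hg
  set h : ℕ → ℝ := fun s => if Even s then 0 else -(((Nat.factorial s : ℝ))⁻¹ - ((Nat.factorial (s+1) : ℝ))⁻¹) with hh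
  have hfactpos : ∀ n : ℕ, (0:ℝ) < ((Nat.factorial n : ℝ))⁻¹ := fun n => by positivity
  have hpair : ∀ s : ℕ, 0 ≤ ((Nat.factorial s : ℝ))⁻¹ - ((Nat.factorial (s+1) : ℝ))⁻¹ := by
    intro s; have := fact_antitone (Nat.le_succ s); simp only at this; linarith
  have key : ∀ s : ℕ, ((s:ℝ)) * ((Nat.factorial (s+1) : ℝ))⁻¹
      = ((Nat.factorial s : ℝ))⁻¹ - ((Nat.factorial (s+1) : ℝ))⁻¹ := by
    intro s
    have hf : (Nat.factorial (s+1) : ℝ) = ((s:ℝ)+1) * Nat.factorial s := by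
      rw [Nat.factorial_succ]; push_cast; ring
    have h0 : (Nat.factorial s : ℝ) ≠ 0 := by positivity
    have h1' : ((s:ℝ)+1) ≠ 0 := by positivity
    field_simp [hf]
    rw [hf]; ring
  -- term bounds
  have hterm_le : ∀ s ∈ F, (q s : ℝ) * (-1) ^ s / (Nat.factorial (s + 1)) ≤ g s := by
    intro s hs
    obtain ⟨h1, h2⟩ := hq s hs
    by_cases hev : Even s
    · rw [hg]; simp only [hev, if_true]
      rw [hev.neg_one_pow, ← key s]
      rw [mul_one, div_eq_mul_inv]
      gcongr

    · rw [hg]; simp only [hev, if_false]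
      rw [(Nat.not_even_iff_odd.mp hev).neg_one_pow]
      have hq0 : (0:ℝ) < (q s : ℝ) := by exact_mod_cast h1
      have hp : (0:ℝ) < (Nat.factorial (s+1) : ℝ) := by positivity
      rw [mul_neg_one, neg_div]
      have : 0 < (q s : ℝ) / (Nat.factorial (s+1) : ℝ) := by positivity
      linarith
  have hterm_ge : ∀ s ∈ F, h s ≤ (q s : ℝ) * (-1) ^ s / (Nat.factorial (s + 1)) := by
    intro s hs
    obtain ⟨h1, h2⟩ := hq s hs
    by_cases hev : Even s
    · rw [hh]; simp only [hev, if_true]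
      rw [hev.neg_one_pow, mul_one]
      have hq0 : (0:ℝ) ≤ (q s : ℝ) := by positivity
      have hp : (0:ℝ) < (Nat.factorial (s+1) : ℝ) := by positivity
      positivity
    · rw [hh]; simp only [hev, if_false]
      rw [(Nat.not_even_iff_odd.mp hev).neg_one_pow]
      rw [mul_neg_one, neg_div, neg_le_neg_iff, div_eq_mul_inv, ← key s]
      gcongr

  -- telescoping sums
  have hsum_g : ∀ n : ℕ, ∑ s ∈ range (2 * n), g s = Sn (2 * n) := by
    intro n
    induction n with
    | zero => simp [Sn]
    | succ m ih =>
      have e1 : 2 * (m + 1) = (2 * m + 1) + 1 := by ring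
      rw [e1, Finset.sum_range_succ, Finset.sum_range_succ, ih]
      unfold Sn
      rw [Finset.sum_range_succ, Finset.sum_range_succ]
      have hev : Even (2 * m) := even_two_mul m
      have hodd : ¬ Even (2 * m + 1) := by simp [Nat.even_add_one, hev]
      rw [hg]
      simp only [hev, hodd, if_true, if_false]
      rw [hev.neg_one_pow, (Nat.not_even_iff_odd.mp hodd).neg_one_pow]
      ring
  have hsum_h : ∀ n : ℕ, ∑ s ∈ range (2 * n), h s = Sn (2 * n + 1) - 1 := by
    intro n
    induction n with
    | zero => simp [Sn]
    | succ m ih =>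
      have e1 : 2 * (m + 1) = (2 * m + 1) + 1 := by ring
      rw [e1, Finset.sum_range_succ, Finset.sum_range_succ, ih]
      conv_rhs => rw [Sn_succ]
      conv_rhs => rw [Sn_succ]
      have hev : Even (2 * m) := even_two_mul m
      have hodd : ¬ Even (2 * m + 1) := by simp [Nat.even_add_one, hev]
      have hev2 : Even (2 * m + 1 + 1) := by simp [Nat.even_add_one, hodd]
      rw [hh]
      simp only [hev, hodd, if_true, if_false]
      rw [(Nat.not_even_iff_odd.mp hodd).neg_one_pow, hev2.neg_one_pow]
      ring
  have hFsub : F ⊆ range (2 * N) := fun s hs => Finset.mem_range.mpr (hN s hs)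
  constructor
  · -- lower bound
    have step1 : ∑ s ∈ range (2 * N), h s ≤ ∑ s ∈ F, h s := by
      have hnn : ∀ i ∈ range (2 * N), i ∉ F → 0 ≤ -h i := by
        intro i _ _
        rw [hh]; dsimp only; split
        · simp
        · simp only [neg_neg]; exact hpair i
      have h' := Finset.sum_le_sum_of_subset_of_nonneg (f := fun s => -h s) hFsub hnn
      simp only [Finset.sum_neg_distrib] at h'
      linarith
    have step2 : ∑ s ∈ F, h s ≤ ∑ s ∈ F, (q s : ℝ) * (-1) ^ s / (Nat.factorial (s + 1)) :=
      Finset.sum_le_sum hterm_ge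
    have hstrict : Real.exp (-1) < Sn (2 * N + 1) := by
      have hb := Sn_le_odd (N + 1)
      have hlt : Sn (2 * (N + 1) + 1) < Sn (2 * N + 1) := by
        have e1 : 2 * (N + 1) + 1 = (2 * N + 1) + 1 + 1 := by ring
        rw [e1]
        unfold Sn
        rw [Finset.sum_range_succ, Finset.sum_range_succ]
        have hev : Even (2 * N) := even_two_mul N
        have hodd : ¬ Even (2 * N + 1) := by simp [Nat.even_add_one, hev]
        have hev2 : Even (2 * N + 1 + 1) := by simpa [Nat.even_add_one] using hodd
        rw [(Nat.not_even_iff_odd.mp hodd).neg_one_pow, hev2.neg_one_pow]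
        have := inv_fact_strict (2 * N + 1) (by omega)
        rw [show 2 * N + 1 + 1 = 2 * N + 2 by ring] at this ⊢
        linarith
      linarith
    have := hsum_h N
    linarith
  · -- upper bound
    have step2 : ∑ s ∈ F, (q s : ℝ) * (-1) ^ s / (Nat.factorial (s + 1)) ≤ ∑ s ∈ F, g s :=
      Finset.sum_le_sum hterm_le
    have step1 : ∑ s ∈ F, g s ≤ ∑ s ∈ range (2 * N), g s := by
      apply Finset.sum_le_sum_of_subset_of_nonneg hFsub
      intro i _ _
      rw [hg]; dsimp only; split
      · exact hpair i
      · exact le_rfl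
    have hstrict : Sn (2 * N) < Real.exp (-1) := by
      have hb := Sn_even_le (N + 1)
      have hlt : Sn (2 * N) < Sn (2 * (N + 1)) := by
        have e1 : 2 * (N + 1) = (2 * N) + 1 + 1 := by ring
        rw [e1]
        unfold Sn
        rw [Finset.sum_range_succ, Finset.sum_range_succ]
        have hev : Even (2 * N) := even_two_mul N
        have hodd : ¬ Even (2 * N + 1) := by simp [Nat.even_add_one, hev]
        rw [hev.neg_one_pow, (Nat.not_even_iff_odd.mp hodd).neg_one_pow]
        have := inv_fact_strict (2 * N) (by omega)
        linarith
      linarith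
    have := hsum_g N
    linarith
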